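/- Let G be a simple graph containing neither C_4 nor C_8 as a subgraph, let C = x_1...x_m x_1 be an induced cycle (hole) of G of length m ≥ 4, and let u be a vertex outside C adjacent to x_i. If there is no hole C* in G with 5 ≤ ℓ(C*) < m, then all neighbors of u on C lie in {x_{i−1}, x_i, x_{i+1}} (indices modulo m). -/

import Mathlib

open SimpleGraph

/-- A hole: a cycle without chords (induced cycle), as a walk. -/
def IsHole {V : Type*} (G : SimpleGraph V) {v : V} (c : G.Walk v v) : Prop :=
  c.IsCycle ∧ ∀ a b : V, a ∈ c.support → b ∈ c.support → G.Adj a b → s(a, b) ∈ c.edges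

/-- An induced cycle (hole) of length `m`, given by an injective map `ZMod m → V`
whose adjacencies are exactly the consecutive pairs. -/
def IsCircInduced {V : Type*} (G : SimpleGraph V) (m : ℕ) (x : ZMod m → V) : Prop :=
  Function.Injective x ∧ ∀ i j : ZMod m, G.Adj (x i) (x j) ↔ (j = i + 1 ∨ i = j + 1)

section Aux

variable {V : Type*} {G : SimpleGraph V} {m : ℕ} {x : ZMod m → V}

/-- Walk along the cycle from `x p` of `g` steps. -/
def arcW (hx : IsCircInduced G m x) (p : ZMod m) : ∀ g : ℕ, G.Walk (x p) (x (p + g))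
  | 0 => Walk.nil.copy rfl (by norm_num)
  | (g+1) => ((arcW hx p g).concat ((hx.2 (p + g) (p + g + 1)).2 (Or.inl rfl))).copy rfl
      (by push_cast; ring_nf)

lemma arcW_support (hx : IsCircInduced G m x) (p : ZMod m) (g : ℕ) :
    (arcW hx p g).support = (List.range (g+1)).map (fun k : ℕ => x (p + k)) := by
  induction g with
  | zero => simp [arcW, List.range_succ]
  | succ g ih =>
      rw [arcW, Walk.support_copy, Walk.support_concat, ih]
      simp only [List.range_succ, List.map_append, List.concat_eq_append, List.map_cons,
        List.map_nil, List.append_assoc]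
      push_cast
      rw [add_assoc]

lemma arcW_edges (hx : IsCircInduced G m x) (p : ZMod m) (g : ℕ) :
    (arcW hx p g).edges = (List.range g).map (fun k : ℕ => s(x (p + k), x (p + k + 1))) := by
  induction g with
  | zero => simp [arcW]
  | succ g ih =>
      rw [arcW, Walk.edges_copy, Walk.edges_concat, ih, List.range_succ]
      simp

lemma arcW_length (hx : IsCircInduced G m x) (p : ZMod m) (g : ℕ) :
    (arcW hx p g).length = g := by
  induction g with
  | zero => simp [arcW]
  | succ g ih => rw [arcW, Walk.length_copy, Walk.length_concat, ih]

lemma cast_inj_of_lt {k l : ℕ} (hk : k < m) (hl : l < m) (h : (k : ZMod m) = l) : k = l := by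
  have hm : 0 < m := Nat.pos_of_ne_zero (by omega)
  haveI : NeZero m := ⟨hm.ne'⟩
  rw [← ZMod.val_cast_of_lt hk, ← ZMod.val_cast_of_lt hl, h]

/-- The fundamental cycle through `u` and an arc of the hole. -/
lemma cycle_spec (hx : IsCircInduced G m x) {u : V} (hu : u ∉ Set.range x)
    {p : ZMod m} {g : ℕ} (hg1 : 1 ≤ g) (hgm : g < m)
    (hup : G.Adj u (x p)) (huq : G.Adj u (x (p + g))) :
    ∃ c : G.Walk u u, c.IsCycle ∧ c.length = g + 2 ∧
      (∀ a, a ∈ c.support ↔ a = u ∨ ∃ k : ℕ, k ≤ g ∧ a = x (p + k)) ∧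
      c.edges = s(u, x p) ::
        ((List.range g).map (fun k : ℕ => s(x (p + k), x (p + k + 1)))).concat s(x (p + g), u) := by
  have hxu : ∀ t : ZMod m, x t ≠ u := fun t h => hu ⟨t, h⟩
  let P : G.Walk (x p) u := (arcW hx p g).concat huq.symm
  have hPsup : P.support = ((List.range (g+1)).map (fun k : ℕ => x (p + k))) ++ [u] := by
    simp [P, Walk.support_concat, arcW_support, List.concat_eq_append]
  have hPedges : P.edges =
      ((List.range g).map (fun k : ℕ => s(x (p + k), x (p + k + 1)))).concat s(x (p + g), u) := by
    simp [P, Walk.edges_concat, arcW_edges]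
  have hinj : ∀ k l : ℕ, k < g+1 → l < g+1 → x (p + k) = x (p + l) → k = l := by
    intro k l hk hl h
    have h2 : (k : ZMod m) = l := add_left_cancel (hx.1 h)
    exact cast_inj_of_lt (by omega) (by omega) h2
  have hnodup : ((List.range (g+1)).map (fun k : ℕ => x (p + k))).Nodup := by
    refine List.Nodup.map_on ?_ List.nodup_range
    intro a ha b hb h
    exact hinj a b (List.mem_range.mp ha) (List.mem_range.mp hb) h
  have hPpath : P.IsPath := by
    rw [Walk.isPath_def, hPsup]
    refine List.Nodup.append hnodup (List.nodup_singleton u) ?_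
    rw [List.disjoint_singleton]
    intro hmem
    obtain ⟨k, -, hk⟩ := List.mem_map.mp hmem
    exact hxu _ hk
  have hedge : s(u, x p) ∉ P.edges := by
    rw [hPedges, List.concat_eq_append]
    intro hmem
    rcases List.mem_append.mp hmem with hmem | hmem
    · obtain ⟨k, -, hk⟩ := List.mem_map.mp hmem
      rw [Sym2.eq_iff] at hk
      rcases hk with ⟨h1, -⟩ | ⟨-, h2⟩
      · exact hxu _ h1
      · exact hxu _ h2
    · rw [List.mem_singleton, Sym2.eq_iff] at hmem
      rcases hmem with ⟨h1, -⟩ | ⟨-, h2⟩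
      · exact hxu _ h1.symm
      · have h3 : p + ((0:ℕ) : ZMod m) = p + (g : ZMod m) := by
          simpa using hx.1 h2
        have := cast_inj_of_lt (by omega) hgm (add_left_cancel h3)
        omega
  refine ⟨Walk.cons hup P, ?_, ?_, ?_, ?_⟩
  · exact (Walk.cons_isCycle_iff P hup).2 ⟨hPpath, hedge⟩
  · rw [Walk.length_cons]
    simp [P, Walk.length_concat, arcW_length]
  · intro a
    rw [Walk.support_cons, List.mem_cons, hPsup, List.mem_append, List.mem_singleton]
    simp only [List.mem_map, List.mem_range]
    constructor
    · rintro (rfl | ⟨k, hk, rfl⟩ | rfl)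
      · exact Or.inl rfl
      · exact Or.inr ⟨k, by omega, rfl⟩
      · exact Or.inl rfl
    · rintro (rfl | ⟨k, hk, rfl⟩)
      · exact Or.inl rfl
      · exact Or.inr (Or.inl ⟨k, by omega, rfl⟩)
  · rw [Walk.edges_cons, hPedges]

/-- The hole version: if `u` has no interior neighbours on the arc. -/
lemma hole_spec (hx : IsCircInduced G m x) {u : V} (hu : u ∉ Set.range x)
    {p : ZMod m} {g : ℕ} (hg2 : 2 ≤ g) (hgm : g + 2 ≤ m)
    (hup : G.Adj u (x p)) (huq : G.Adj u (x (p + g)))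
    (hint : ∀ k : ℕ, 0 < k → k < g → ¬ G.Adj u (x (p + k))) :
    ∃ c : G.Walk u u, IsHole G c ∧ c.length = g + 2 := by
  obtain ⟨c, hcyc, hlen, hsup, hedges⟩ :=
    cycle_spec hx hu (by omega : 1 ≤ g) (by omega : g < m) hup huq
  have e1 : s(u, x p) ∈ c.edges := by rw [hedges]; exact List.mem_cons_self
  have e2 : s(x (p + g), u) ∈ c.edges := by
    rw [hedges, List.concat_eq_append]
    simp
  have e3 : ∀ k : ℕ, k < g → s(x (p + k), x (p + k + 1)) ∈ c.edges := by
    intro k hk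
    rw [hedges, List.concat_eq_append]
    exact List.mem_cons_of_mem _ (List.mem_append_left _
      (List.mem_map.mpr ⟨k, List.mem_range.mpr hk, rfl⟩))
  have hinj : ∀ k l : ℕ, k < m → l < m → x (p + k) = x (p + l) → k = l := by
    intro k l hk hl h
    exact cast_inj_of_lt hk hl (add_left_cancel (hx.1 h))
  refine ⟨c, ⟨hcyc, ?_⟩, hlen⟩
  intro a b ha hb hab
  rcases (hsup a).1 ha with rfl | ⟨k, hk, rfl⟩
  · rcases (hsup b).1 hb with rfl | ⟨l, hl, rfl⟩
    · exact absurd rfl hab.ne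
    · -- u adjacent to x (p + l)
      rcases Nat.eq_zero_or_pos l with rfl | hl0
      · simpa using e1
      rcases eq_or_lt_of_le hl with rfl | hlg
      · rw [Sym2.eq_swap]; exact e2
      · exact absurd hab (hint l hl0 hlg)
  · rcases (hsup b).1 hb with rfl | ⟨l, hl, rfl⟩
    · rcases Nat.eq_zero_or_pos k with rfl | hk0
      · rw [Sym2.eq_swap]; simpa using e1
      rcases eq_or_lt_of_le hk with rfl | hkg
      · exact e2
      · exact absurd hab.symm (hint k hk0 hkg)
    · rcases (hx.2 _ _).1 hab with hcase | hcase
      · have h1 : ((l : ℕ) : ZMod m) = ((k + 1 : ℕ) : ZMod m) := by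
          push_cast
          exact add_left_cancel (by rw [hcase, add_assoc])
        have hlk : l = k + 1 := cast_inj_of_lt (by omega) (by omega) h1
        subst hlk
        have := e3 k (by omega)
        convert this using 3
      · have h1 : ((k : ℕ) : ZMod m) = ((l + 1 : ℕ) : ZMod m) := by
          push_cast
          exact add_left_cancel (by rw [hcase, add_assoc])
        have hkl : k = l + 1 := cast_inj_of_lt (by omega) (by omega) h1
        subst hkl
        rw [Sym2.eq_swap]
        have := e3 l (by omega)
        convert this using 3

lemma key (hx : IsCircInduced G m x) {u : V} (hu : u ∉ Set.range x)
    (hC4 : ¬ ∃ (v : V) (c : G.Walk v v), c.IsCycle ∧ c.length = 4)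
    (hshort : ¬ ∃ (w : V) (d : G.Walk w w), IsHole G d ∧ 5 ≤ d.length ∧ d.length < m) :
    ∀ d : ℕ, 2 ≤ d → 2 * d ≤ m → ∀ p : ZMod m, G.Adj u (x p) → G.Adj u (x (p + d)) → False := by
  intro d
  induction d using Nat.strong_induction_on with
  | _ d ih =>
    intro hd2 hdm p hup hud
    classical
    by_cases hd : d = 2
    · subst hd
      obtain ⟨c, hc, hlen, -, -⟩ :=
        cycle_spec hx hu (p := p) (g := 2) (by omega) (by omega) hup (by exact_mod_cast hud)
      exact hC4 ⟨u, c, hc, hlen⟩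
    · have hex : ∃ k, 0 < k ∧ k ≤ d ∧ G.Adj u (x (p + k)) := ⟨d, by omega, le_rfl, hud⟩
      obtain ⟨k₀, hk₀pos, hk₀le, hk₀adj, hmin⟩ :
          ∃ k₀ : ℕ, 0 < k₀ ∧ k₀ ≤ d ∧ G.Adj u (x (p + k₀)) ∧
            ∀ k : ℕ, 0 < k → k < k₀ → ¬ G.Adj u (x (p + k)) := by
        obtain ⟨h1, h2, h3⟩ := Nat.find_spec hex
        exact ⟨Nat.find hex, h1, h2, h3, fun k hk1 hk2 hadj =>
          Nat.find_min hex hk2 ⟨hk1, by omega, hadj⟩⟩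
      rcases lt_trichotomy k₀ 3 with hk3 | hk3 | hk3
      · -- k₀ = 1 or 2
        interval_cases k₀
        · -- k₀ = 1 : recurse
          refine ih (d - 1) (by omega) (by omega) (by omega) (p + 1) (by exact_mod_cast hk₀adj) ?_
          have heq : (p + 1) + ((d - 1 : ℕ) : ZMod m) = p + (d : ℕ) := by
            push_cast [Nat.cast_sub (show 1 ≤ d by omega)]
            ring
          rw [heq]
          exact hud
        · -- k₀ = 2 : C4
          obtain ⟨c, hc, hlen, -, -⟩ :=
            cycle_spec hx hu (p := p) (g := 2) (by omega) (by omega) hup (by exact_mod_cast hk₀adj)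
          exact hC4 ⟨u, c, hc, hlen⟩
      · -- k₀ = 3 ≤ : hole of length k₀ + 2 — handled below together
        obtain ⟨c, hc, hlen⟩ :=
          hole_spec hx hu (p := p) (g := k₀) (by omega) (by omega) hup hk₀adj hmin
        exact hshort ⟨u, c, hc, by omega, by omega⟩
      · obtain ⟨c, hc, hlen⟩ :=
          hole_spec hx hu (p := p) (g := k₀) (by omega) (by omega) hup hk₀adj hmin
        exact hshort ⟨u, c, hc, by omega, by omega⟩

end Aux

theorem stmt_4 {V : Type*} (G : SimpleGraph V)
    (hC4 : ¬ ∃ (v : V) (c : G.Walk v v), c.IsCycle ∧ c.length = 4)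
    (hC8 : ¬ ∃ (v : V) (c : G.Walk v v), c.IsCycle ∧ c.length = 8)
    (m : ℕ) (hm : 4 ≤ m) (x : ZMod m → V) (hx : IsCircInduced G m x)
    (u : V) (hu : u ∉ Set.range x) (i : ZMod m) (hui : G.Adj u (x i))
    (hshort : ¬ ∃ (w : V) (d : G.Walk w w), IsHole G d ∧ 5 ≤ d.length ∧ d.length < m) :
    ∀ j : ZMod m, G.Adj u (x j) → j = i - 1 ∨ j = i ∨ j = i + 1 := by
  intro j huj
  by_contra hcon
  push_neg at hcon
  obtain ⟨h1, h2, h3⟩ := hcon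
  haveI : NeZero m := ⟨by omega⟩
  set a := (j - i).val with hadef
  have hcast : ((a : ℕ) : ZMod m) = j - i := ZMod.natCast_rightInverse (j - i)
  have haltm : a < m := ZMod.val_lt (j - i)
  have ha0 : a ≠ 0 := by
    intro h0
    rw [h0] at hcast
    apply h2
    have : j - i = 0 := by exact_mod_cast hcast.symm
    linear_combination this
  have ha1 : a ≠ 1 := by
    intro h0
    rw [h0] at hcast
    apply h3
    have : j - i = 1 := by exact_mod_cast hcast.symm
    linear_combination this
  have ham1 : a ≠ m - 1 := by
    intro h0
    apply h1
    rw [h0] at hcast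
    have hm1 : ((m - 1 : ℕ) : ZMod m) = -1 := by
      push_cast [Nat.cast_sub (show 1 ≤ m by omega)]
      simp
    rw [hm1] at hcast
    linear_combination -hcast
  have hja : (i + (a : ℕ) : ZMod m) = j := by rw [hcast]; ring
  by_cases hdir : 2 * a ≤ m
  · exact key hx hu hC4 hshort a (by omega) hdir i hui (by rw [hja]; exact huj)
  · -- use the reversed cycle
    set x' : ZMod m → V := fun t => x (-t) with hx'def
    have hx' : IsCircInduced G m x' := by
      refine ⟨fun s t hst => ?_, fun s t => ?_⟩
      · have := hx.1 hst
        have := neg_injective this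
        simpa using this
      · rw [show x' s = x (-s) from rfl, show x' t = x (-t) from rfl, hx.2 (-s) (-t)]
        constructor
        · rintro (h | h)
          · right; linear_combination h
          · left; linear_combination h
        · rintro (h | h)
          · right; linear_combination h
          · left; linear_combination h
    have hu' : u ∉ Set.range x' := by
      intro ⟨t, ht⟩
      exact hu ⟨-t, ht⟩
    have hb1 : ((m - a : ℕ) : ZMod m) = -((a : ℕ) : ZMod m) := by
      push_cast [Nat.cast_sub (le_of_lt haltm)]
      simp
    refine key hx' hu' hC4 hshort (m - a) (by omega) (by omega) (-i) ?_ ?_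
    · show G.Adj u (x (-(-i)))
      rw [neg_neg]
      exact hui
    · show G.Adj u (x (-(-i + ((m - a : ℕ) : ZMod m))))
      rw [hb1, show -(-i + -((a:ℕ) : ZMod m)) = i + (a : ℕ) by ring, hja]
      exact huj
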